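/- Let G be C¹ on an interval [c, d] with |G'| ≤ M_{G'}, let κ > 0, b_Φ > 0, and N ≥ 1. For two families (ν_α, φ_{αβ}, θ_α) and (ν̃_α, φ̃_{αβ}, θ̃_α) with |φ_{αβ}|, |φ̃_{αβ}| ≤ b_Φ (and all arguments of G in [c,d]), define ω_α := G(ν_α + (κ/N) Σ_β φ_{αβ} sin(θ_β − θ_α)) and similarly ω̃_α. Then for p ∈ (1, ∞), ‖Ω − Ω̃‖_p ≤ M_{G'} ‖V − Ṽ‖_p + 2κ b_Φ M_{G'} ‖Θ − Θ̃‖_p + (κ M_{G'}/N^{1/p}) ‖Φ − Φ̃‖_p, where ‖·‖_p denotes the ℓ_p-norm of the vector (resp. entrywise ℓ_p-norm of the matrix Φ − Φ̃). -/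

import Mathlib

open Finset

private lemma aux_pull {ι : Type*} [Fintype ι] {cc p : ℝ} (hc : 0 ≤ cc) (hp : 0 < p)
    (f : ι → ℝ) (hf : ∀ i, 0 ≤ f i) :
    (∑ i, (cc * f i) ^ p) ^ (1 / p) = cc * (∑ i, f i ^ p) ^ (1 / p) := by
  have h1 : ∀ i ∈ (univ : Finset ι), (cc * f i) ^ p = cc ^ p * f i ^ p :=
    fun i _ => Real.mul_rpow hc (hf i)
  rw [Finset.sum_congr rfl h1, ← Finset.mul_sum,
    Real.mul_rpow (Real.rpow_nonneg hc p) (Finset.sum_nonneg fun i _ => Real.rpow_nonneg (hf i) p),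
    ← Real.rpow_mul hc, mul_one_div_cancel hp.ne', Real.rpow_one]

private lemma aux_holder {ι : Type*} [Fintype ι] {p q : ℝ} (hpq : Real.HolderConjugate p q)
    (f : ι → ℝ) (hf : ∀ i, 0 ≤ f i) :
    ∑ i, f i ≤ (∑ i, f i ^ p) ^ (1 / p) * (Fintype.card ι : ℝ) ^ (1 / q) := by
  have h := Real.inner_le_Lp_mul_Lq_of_nonneg (s := univ) (f := f) (g := fun _ => (1 : ℝ)) hpq
    (fun i _ => hf i) (fun i _ => zero_le_one)
  simpa [Real.one_rpow, Finset.card_univ] using h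

private lemma sin_lip (a b : ℝ) : |Real.sin a - Real.sin b| ≤ |a - b| := by
  rw [Real.sin_sub_sin, abs_mul, abs_mul]
  calc |2| * |Real.sin ((a - b) / 2)| * |Real.cos ((a + b) / 2)|
      ≤ |2| * |(a - b) / 2| * 1 :=
        mul_le_mul (mul_le_mul_of_nonneg_left Real.abs_sin_le_abs (abs_nonneg 2))
          (Real.abs_cos_le_one _) (abs_nonneg _) (by positivity)
    _ = |a - b| := by rw [abs_div]; simp; ring
  

theorem initial_frequency_lp_estimate (N : ℕ) (hN : 1 ≤ N) (p : ℝ) (hp : 1 < p)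
    (c d κ bΦ MG' : ℝ) (hκ : 0 < κ) (hbΦ : 0 < bΦ)
    (G : ℝ → ℝ)
    (hGC : ContDiffOn ℝ 1 G (Set.Icc c d))
    (hG' : ∀ x ∈ Set.Icc c d, |derivWithin G (Set.Icc c d) x| ≤ MG')
    (ν ν' θ θ' ω ω' : Fin N → ℝ) (φ φ' : Fin N → Fin N → ℝ)
    (hφ : ∀ α β, |φ α β| ≤ bΦ ∧ |φ' α β| ≤ bΦ)
    (harg : ∀ α, (ν α + κ / N * ∑ β, φ α β * Real.sin (θ β - θ α)) ∈ Set.Icc c d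
      ∧ (ν' α + κ / N * ∑ β, φ' α β * Real.sin (θ' β - θ' α)) ∈ Set.Icc c d)
    (hω : ∀ α, ω α = G (ν α + κ / N * ∑ β, φ α β * Real.sin (θ β - θ α)))
    (hω' : ∀ α, ω' α = G (ν' α + κ / N * ∑ β, φ' α β * Real.sin (θ' β - θ' α))) :
    (∑ α, |ω α - ω' α| ^ p) ^ (1 / p)
      ≤ MG' * (∑ α, |ν α - ν' α| ^ p) ^ (1 / p)
        + 2 * κ * bΦ * MG' * (∑ α, |θ α - θ' α| ^ p) ^ (1 / p)
        + κ * MG' / (N : ℝ) ^ (1 / p)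
          * (∑ α, ∑ β, |φ α β - φ' α β| ^ p) ^ (1 / p) := by
  haveI : NeZero N := ⟨by omega⟩
  have hN0 : (0 : ℝ) < N := by positivity
  have hp0 : (0 : ℝ) < p := by linarith
  have hp1 : (1 : ℝ) ≤ p := hp.le
  set q : ℝ := p / (p - 1) with hq
  have hpq : Real.HolderConjugate p q := Real.HolderConjugate.conjExponent hp
  have hq0 : 0 < q := hpq.symm.pos
  have hMG : 0 ≤ MG' := le_trans (abs_nonneg _) (hG' _ (harg 0).1)
  set x : Fin N → ℝ := fun α => ν α + κ / N * ∑ β, φ α β * Real.sin (θ β - θ α) with hx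
  set x' : Fin N → ℝ := fun α => ν' α + κ / N * ∑ β, φ' α β * Real.sin (θ' β - θ' α) with hx'
  set Sθ : ℝ := ∑ β, |θ β - θ' β| with hSθ
  have hSθ0 : 0 ≤ Sθ := Finset.sum_nonneg fun i _ => abs_nonneg _
  -- pointwise bound pieces
  set F1 : Fin N → ℝ := fun α => MG' * |ν α - ν' α| with hF1
  set F2 : Fin N → ℝ := fun α => MG' * κ * bΦ / N * (Sθ + N * |θ α - θ' α|) with hF2
  set F3 : Fin N → ℝ := fun α => MG' * κ / N * ∑ β, |φ α β - φ' α β| with hF3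
  have hF1n : ∀ α, 0 ≤ F1 α := fun α => by positivity
  have hF2n : ∀ α, 0 ≤ F2 α := fun α => by
    have : 0 ≤ Sθ + N * |θ α - θ' α| := by positivity
    positivity
  have hF3n : ∀ α, 0 ≤ F3 α := fun α => by
    have : 0 ≤ ∑ β, |φ α β - φ' α β| := Finset.sum_nonneg fun i _ => abs_nonneg _
    positivity
  -- Step 1: Lipschitz bound
  have step1 : ∀ α, |ω α - ω' α| ≤ MG' * |x α - x' α| := by
    intro α
    have h := (convex_Icc c d).norm_image_sub_le_of_norm_derivWithin_le
      (hGC.differentiableOn one_ne_zero)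
      (fun y hy => by simpa [Real.norm_eq_abs] using hG' y hy)
      (harg α).2 (harg α).1
    rw [hω, hω']
    simpa [Real.norm_eq_abs] using h
  -- Step 2: argument difference bound
  have step2 : ∀ α, |x α - x' α|
      ≤ |ν α - ν' α| + κ / N * ∑ β, (bΦ * (|θ β - θ' β| + |θ α - θ' α|) + |φ α β - φ' α β|) := by
    intro α
    have hterm : ∀ β, |φ α β * Real.sin (θ β - θ α) - φ' α β * Real.sin (θ' β - θ' α)|
        ≤ bΦ * (|θ β - θ' β| + |θ α - θ' α|) + |φ α β - φ' α β| := by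
      intro β
      have key : φ α β * Real.sin (θ β - θ α) - φ' α β * Real.sin (θ' β - θ' α)
          = φ α β * (Real.sin (θ β - θ α) - Real.sin (θ' β - θ' α))
            + (φ α β - φ' α β) * Real.sin (θ' β - θ' α) := by ring
      have hsin : |Real.sin (θ β - θ α) - Real.sin (θ' β - θ' α)|
          ≤ |θ β - θ' β| + |θ α - θ' α| := by
        calc |Real.sin (θ β - θ α) - Real.sin (θ' β - θ' α)|
            ≤ |(θ β - θ α) - (θ' β - θ' α)| := sin_lip _ _
          _ ≤ |θ β - θ' β| + |θ α - θ' α| := by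
              have : (θ β - θ α) - (θ' β - θ' α) = (θ β - θ' β) - (θ α - θ' α) := by ring
              rw [this]; exact abs_sub _ _
      calc |φ α β * Real.sin (θ β - θ α) - φ' α β * Real.sin (θ' β - θ' α)|
          ≤ |φ α β * (Real.sin (θ β - θ α) - Real.sin (θ' β - θ' α))|
            + |(φ α β - φ' α β) * Real.sin (θ' β - θ' α)| := by rw [key]; exact abs_add_le _ _
        _ ≤ bΦ * (|θ β - θ' β| + |θ α - θ' α|) + |φ α β - φ' α β| * 1 := by
            rw [abs_mul, abs_mul]
            refine add_le_add ?_ ?_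
            · exact mul_le_mul (hφ α β).1 hsin (abs_nonneg _) hbΦ.le
            · exact mul_le_mul_of_nonneg_left
                (abs_le.mpr ⟨Real.neg_one_le_sin _, Real.sin_le_one _⟩) (abs_nonneg _)
        _ = bΦ * (|θ β - θ' β| + |θ α - θ' α|) + |φ α β - φ' α β| := by ring
    calc |x α - x' α|
        ≤ |ν α - ν' α|
          + |κ / N * ∑ β, φ α β * Real.sin (θ β - θ α)
            - κ / N * ∑ β, φ' α β * Real.sin (θ' β - θ' α)| := by
          simp only [hx, hx']
          have : (ν α + κ / N * ∑ β, φ α β * Real.sin (θ β - θ α))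
              - (ν' α + κ / N * ∑ β, φ' α β * Real.sin (θ' β - θ' α))
              = (ν α - ν' α) + (κ / N * ∑ β, φ α β * Real.sin (θ β - θ α)
                - κ / N * ∑ β, φ' α β * Real.sin (θ' β - θ' α)) := by ring
          rw [this]; exact abs_add_le _ _
      _ ≤ |ν α - ν' α| + κ / N * ∑ β, (bΦ * (|θ β - θ' β| + |θ α - θ' α|) + |φ α β - φ' α β|) := by
          gcongr
          rw [← mul_sub, ← Finset.sum_sub_distrib, abs_mul, abs_of_pos (by positivity : (0:ℝ) < κ / N)]
          gcongr
          calc |∑ β, (φ α β * Real.sin (θ β - θ α) - φ' α β * Real.sin (θ' β - θ' α))|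
              ≤ ∑ β, |φ α β * Real.sin (θ β - θ α) - φ' α β * Real.sin (θ' β - θ' α)| :=
                Finset.abs_sum_le_sum_abs _ _
            _ ≤ _ := Finset.sum_le_sum fun β _ => hterm β
  -- combined pointwise bound
  have ptwise : ∀ α, |ω α - ω' α| ≤ F1 α + F2 α + F3 α := by
    intro α
    refine (step1 α).trans ?_
    have h2 := step2 α
    have := mul_le_mul_of_nonneg_left h2 hMG
    refine this.trans (le_of_eq ?_)
    simp only [hF1, hF2, hF3, hSθ]
    have hS1 : ∑ β, (bΦ * (|θ β - θ' β| + |θ α - θ' α|) + |φ α β - φ' α β|)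
        = bΦ * (∑ β, |θ β - θ' β|) + (N : ℝ) * (bΦ * |θ α - θ' α|)
          + ∑ β, |φ α β - φ' α β| := by
      simp [mul_add, Finset.sum_add_distrib, ← Finset.mul_sum, Finset.sum_const,
        Finset.card_univ, mul_comm, mul_left_comm]
    rw [hS1]
    field_simp
    ring
  -- lp of pointwise bound
  have main1 : (∑ α, |ω α - ω' α| ^ p) ^ (1 / p) ≤ (∑ α, (F1 α + F2 α + F3 α) ^ p) ^ (1 / p) :=
    Real.rpow_le_rpow (Finset.sum_nonneg fun i _ => Real.rpow_nonneg (abs_nonneg _) p)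
      (Finset.sum_le_sum fun α _ => Real.rpow_le_rpow (abs_nonneg _) (ptwise α) hp0.le)
      (by positivity)
  -- Minkowski twice
  have mink : (∑ α, (F1 α + F2 α + F3 α) ^ p) ^ (1 / p)
      ≤ (∑ α, F1 α ^ p) ^ (1 / p) + (∑ α, F2 α ^ p) ^ (1 / p) + (∑ α, F3 α ^ p) ^ (1 / p) := by
    calc (∑ α, (F1 α + F2 α + F3 α) ^ p) ^ (1 / p)
        ≤ (∑ α, (F1 α + F2 α) ^ p) ^ (1 / p) + (∑ α, F3 α ^ p) ^ (1 / p) :=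
          Real.Lp_add_le_of_nonneg Finset.univ hp1 (fun i _ => add_nonneg (hF1n i) (hF2n i)) (fun i _ => hF3n i)
      _ ≤ (∑ α, F1 α ^ p) ^ (1 / p) + (∑ α, F2 α ^ p) ^ (1 / p) + (∑ α, F3 α ^ p) ^ (1 / p) := by
          gcongr
          exact Real.Lp_add_le_of_nonneg Finset.univ hp1 (fun i _ => hF1n i) (fun i _ => hF2n i)
  -- Term 1
  have t1 : (∑ α, F1 α ^ p) ^ (1 / p) = MG' * (∑ α, |ν α - ν' α| ^ p) ^ (1 / p) :=
    aux_pull hMG hp0 _ (fun i => abs_nonneg _)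
  -- Hölder for θ
  have hSθle : Sθ ≤ (∑ β, |θ β - θ' β| ^ p) ^ (1 / p) * (N : ℝ) ^ (1 / q) := by
    have := aux_holder hpq (fun β => |θ β - θ' β|) (fun β => abs_nonneg _)
    simpa [Fintype.card_fin] using this
  have hinv : 1 / p + 1 / q = 1 := by
    have := hpq.inv_add_inv_eq_one
    simpa [one_div] using this
  have hNq : (N : ℝ) ^ (1 / p) * (N : ℝ) ^ (1 / q) = N := by
    rw [← Real.rpow_add hN0, hinv, Real.rpow_one]
  -- Term 2
  have t2 : (∑ α, F2 α ^ p) ^ (1 / p) ≤ 2 * κ * bΦ * MG' * (∑ α, |θ α - θ' α| ^ p) ^ (1 / p) := by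
    have hc : 0 ≤ MG' * κ * bΦ / N := by positivity
    have heq : (∑ α, F2 α ^ p) ^ (1 / p)
        = MG' * κ * bΦ / N * (∑ α, (Sθ + (N : ℝ) * |θ α - θ' α|) ^ p) ^ (1 / p) :=
      aux_pull hc hp0 _ (fun α => by positivity)
    rw [heq]
    have hmink2 : (∑ α, (Sθ + (N : ℝ) * |θ α - θ' α|) ^ p) ^ (1 / p)
        ≤ (∑ _α : Fin N, Sθ ^ p) ^ (1 / p) + (∑ α, ((N : ℝ) * |θ α - θ' α|) ^ p) ^ (1 / p) :=
      Real.Lp_add_le_of_nonneg Finset.univ hp1 (fun i _ => hSθ0) (fun i _ => by positivity)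
    have hconst : (∑ _α : Fin N, Sθ ^ p) ^ (1 / p) = (N : ℝ) ^ (1 / p) * Sθ := by
      rw [Finset.sum_const, Finset.card_univ, Fintype.card_fin, nsmul_eq_mul,
        Real.mul_rpow (by positivity) (Real.rpow_nonneg hSθ0 p),
        ← Real.rpow_mul hSθ0, mul_one_div_cancel hp0.ne', Real.rpow_one]
    have hNpull : (∑ α, ((N : ℝ) * |θ α - θ' α|) ^ p) ^ (1 / p)
        = (N : ℝ) * (∑ α, |θ α - θ' α| ^ p) ^ (1 / p) :=
      aux_pull (by positivity) hp0 _ (fun i => abs_nonneg _)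
    set T : ℝ := (∑ α, |θ α - θ' α| ^ p) ^ (1 / p) with hT
    have hT0 : 0 ≤ T := Real.rpow_nonneg (Finset.sum_nonneg fun i _ => Real.rpow_nonneg (abs_nonneg _) p) _
    calc MG' * κ * bΦ / N * (∑ α, (Sθ + (N : ℝ) * |θ α - θ' α|) ^ p) ^ (1 / p)
        ≤ MG' * κ * bΦ / N * ((N : ℝ) ^ (1 / p) * Sθ + (N : ℝ) * T) := by
          refine mul_le_mul_of_nonneg_left ?_ hc
          rw [← hconst, ← hNpull]; exact hmink2
      _ ≤ MG' * κ * bΦ / N * ((N : ℝ) ^ (1 / p) * (T * (N : ℝ) ^ (1 / q)) + (N : ℝ) * T) :=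
          mul_le_mul_of_nonneg_left (add_le_add_left
            (mul_le_mul_of_nonneg_left hSθle (by positivity)) _) hc
      _ = 2 * κ * bΦ * MG' * T := by
          have : (N : ℝ) ^ (1 / p) * (T * (N : ℝ) ^ (1 / q)) = (N : ℝ) * T := by
            rw [show (N : ℝ) ^ (1 / p) * (T * (N : ℝ) ^ (1 / q))
              = ((N : ℝ) ^ (1 / p) * (N : ℝ) ^ (1 / q)) * T by ring, hNq]
          rw [this]
          field_simp
          ring
  -- Term 3
  have t3 : (∑ α, F3 α ^ p) ^ (1 / p)
      ≤ κ * MG' / (N : ℝ) ^ (1 / p) * (∑ α, ∑ β, |φ α β - φ' α β| ^ p) ^ (1 / p) := by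
    have hc : 0 ≤ MG' * κ / N := by positivity
    have heq : (∑ α, F3 α ^ p) ^ (1 / p)
        = MG' * κ / N * (∑ α, (∑ β, |φ α β - φ' α β|) ^ p) ^ (1 / p) :=
      aux_pull hc hp0 _ (fun α => Finset.sum_nonneg fun i _ => abs_nonneg _)
    rw [heq]
    have hrow : ∀ α, ∑ β, |φ α β - φ' α β|
        ≤ (N : ℝ) ^ (1 / q) * (∑ β, |φ α β - φ' α β| ^ p) ^ (1 / p) := by
      intro α
      have := aux_holder hpq (fun β => |φ α β - φ' α β|) (fun β => abs_nonneg _)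
      simpa [Fintype.card_fin, mul_comm] using this
    have hstep : (∑ α, (∑ β, |φ α β - φ' α β|) ^ p) ^ (1 / p)
        ≤ (N : ℝ) ^ (1 / q) * (∑ α, ∑ β, |φ α β - φ' α β| ^ p) ^ (1 / p) := by
      have h1 : (∑ α, (∑ β, |φ α β - φ' α β|) ^ p) ^ (1 / p)
          ≤ (∑ α, ((N : ℝ) ^ (1 / q) * (∑ β, |φ α β - φ' α β| ^ p) ^ (1 / p)) ^ p) ^ (1 / p) :=
        Real.rpow_le_rpow
          (Finset.sum_nonneg fun i _ => Real.rpow_nonneg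
            (Finset.sum_nonneg fun j _ => abs_nonneg _) p)
          (Finset.sum_le_sum fun α _ => Real.rpow_le_rpow
            (Finset.sum_nonneg fun j _ => abs_nonneg _) (hrow α) hp0.le)
          (by positivity)
      refine h1.trans (le_of_eq ?_)
      rw [aux_pull (by positivity) hp0 _ (fun α => Real.rpow_nonneg
        (Finset.sum_nonneg fun j _ => Real.rpow_nonneg (abs_nonneg _) p) _)]
      congr 1
      congr 1
      refine Finset.sum_congr rfl fun α _ => ?_
      rw [← Real.rpow_mul (Finset.sum_nonneg fun j _ => Real.rpow_nonneg (abs_nonneg _) p),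
        one_div_mul_cancel hp0.ne', Real.rpow_one]
    calc MG' * κ / N * (∑ α, (∑ β, |φ α β - φ' α β|) ^ p) ^ (1 / p)
        ≤ MG' * κ / N * ((N : ℝ) ^ (1 / q) * (∑ α, ∑ β, |φ α β - φ' α β| ^ p) ^ (1 / p)) :=
          mul_le_mul_of_nonneg_left hstep hc
      _ = κ * MG' / (N : ℝ) ^ (1 / p) * (∑ α, ∑ β, |φ α β - φ' α β| ^ p) ^ (1 / p) := by
          have h1 : ((N : ℝ) ^ (1 / p)) ≠ 0 := (Real.rpow_pos_of_pos hN0 _).ne'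
          have h2 : ((N : ℝ) ^ (1 / q)) ≠ 0 := (Real.rpow_pos_of_pos hN0 _).ne'
          have hkey : MG' * κ / N * (N : ℝ) ^ (1 / q) = κ * MG' / (N : ℝ) ^ (1 / p) := by
            rw [eq_div_iff h1]
            calc MG' * κ / N * (N : ℝ) ^ (1 / q) * (N : ℝ) ^ (1 / p)
                = MG' * κ / N * ((N : ℝ) ^ (1 / p) * (N : ℝ) ^ (1 / q)) := by ring
              _ = MG' * κ / N * N := by rw [hNq]
              _ = κ * MG' := by field_simp [hN0.ne']
          rw [← hkey]; ring
  calc (∑ α, |ω α - ω' α| ^ p) ^ (1 / p)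
      ≤ (∑ α, F1 α ^ p) ^ (1 / p) + (∑ α, F2 α ^ p) ^ (1 / p) + (∑ α, F3 α ^ p) ^ (1 / p) :=
        main1.trans mink
    _ ≤ _ := by rw [t1]; gcongr
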